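/- Let G be a finite p-group of nilpotency class 2 such that exp(G/Z(G)) ≤ exp(L(G)). Then |Aut_l(G)| ≥ |G/Z(G)| · p^{r(s−1)}, where r is the rank of the finite abelian p-group G/Z(G) and s is the rank of the finite abelian p-group L(G). -/

import Mathlib

/-- The absolute centre `L(G)`: elements fixed by every automorphism of `G`. -/
def absoluteCenter (G : Type*) [Group G] : Subgroup G where
  carrier := {g | ∀ α : MulAut G, α g = g}
  one_mem' := fun α => map_one α
  mul_mem' := fun {a b} ha hb α => by rw [map_mul, ha α, hb α]
  inv_mem' := fun {a} ha α => by rw [map_inv, ha α]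

lemma absoluteCenter_le_center (G : Type*) [Group G] :
    absoluteCenter G ≤ Subgroup.center G := fun g hg => by
  rw [Subgroup.mem_center_iff]
  intro h
  have h1 : h * g * h⁻¹ = g := by simpa [MulAut.conj_apply] using hg (MulAut.conj h)
  calc h * g = (h * g * h⁻¹) * h := by group
    _ = g * h := by rw [h1]

instance (G : Type*) [Group G] : (absoluteCenter G).Normal :=
  ⟨fun g hg h => by
    have h1 : h * g * h⁻¹ = g := by simpa [MulAut.conj_apply] using hg (MulAut.conj h)
    rw [h1]; exact hg⟩

/-- `L(G)` is central, hence abelian. -/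
instance (G : Type*) [Group G] : CommGroup (absoluteCenter G) :=
  { (inferInstance : Group (absoluteCenter G)) with
    mul_comm := fun a b => Subtype.ext
      ((Subgroup.mem_center_iff.mp (absoluteCenter_le_center G a.2) b.1).symm) }

/-- The group `Aut_l(G)` of absolute central automorphisms of `G`. -/
def absCentralAut (G : Type*) [Group G] : Subgroup (MulAut G) where
  carrier := {α | ∀ g : G, g⁻¹ * α g ∈ absoluteCenter G}
  one_mem' := fun g => by simpa using (absoluteCenter G).one_mem
  mul_mem' := fun {α β} hα hβ g => by
    have h : g⁻¹ * (α * β) g = (g⁻¹ * β g) * ((β g)⁻¹ * α (β g)) := by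
      simp [MulAut.mul_apply, mul_assoc]
    rw [h]; exact mul_mem (hβ g) (hα (β g))
  inv_mem' := fun {α} hα g => by
    have h : g⁻¹ * α⁻¹ g = ((α⁻¹ g)⁻¹ * α (α⁻¹ g))⁻¹ := by
      simp [MulAut.inv_def, mul_assoc]
    rw [h]; exact inv_mem (hα (α⁻¹ g))

/-! ### Auxiliary lemmas -/

open Multiplicative

section PiHom
variable {ι : Type*} [Fintype ι] [DecidableEq ι] {M : ι → Type*} [∀ i, CommGroup (M i)]
  {L : Type*} [CommGroup L]

/-- Homomorphisms out of a finite product of commutative groups. -/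
noncomputable def piHomEquiv : ((∀ i, M i) →* L) ≃ ∀ i, (M i →* L) where
  toFun f i := f.comp (MonoidHom.mulSingle M i)
  invFun F := MonoidHom.mk' (fun x => ∏ i, F i (x i)) (by
    intro x y
    simp only [Pi.mul_apply, map_mul]
    rw [Finset.prod_mul_distrib])
  left_inv f := by
    ext x
    simp only [MonoidHom.mk'_apply, MonoidHom.comp_apply, MonoidHom.mulSingle_apply]
    rw [← map_prod, Finset.univ_prod_mulSingle]
  right_inv F := by
    ext i x
    simp only [MonoidHom.mk'_apply, MonoidHom.comp_apply, MonoidHom.mulSingle_apply]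
    rw [Finset.prod_eq_single i (fun j _ hj => by
      rw [Pi.mulSingle_eq_of_ne hj, map_one]) (fun h => absurd (Finset.mem_univ i) h)]
    rw [Pi.mulSingle_eq_same]
end PiHom

/-- Precomposition of homomorphisms with a `MulEquiv`. -/
def homPrecompEquiv {A B L : Type*} [Group A] [Group B] [Group L] (e : A ≃* B) :
    (A →* L) ≃ (B →* L) where
  toFun f := f.comp e.symm.toMonoidHom
  invFun f := f.comp e.toMonoidHom
  left_inv f := by ext x; simp
  right_inv f := by ext x; simp

lemma zmod_torsion_card_ge {p : ℕ} (hp : p.Prime) (a b : ℕ) :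
    p ^ min a b ≤ Nat.card {y : Multiplicative (ZMod (p ^ b)) // y ^ p ^ a = 1} := by
  haveI : NeZero (p ^ b) := ⟨pow_ne_zero _ hp.pos.ne'⟩
  set c : ZMod (p ^ b) := ((p ^ (b - min a b) : ℕ) : ZMod (p ^ b)) with hc
  have hmem : ∀ x : ZMod (p ^ b), x ∈ AddSubgroup.zmultiples c → (p ^ a) • x = 0 := by
    rintro x ⟨k, rfl⟩
    rw [smul_comm]
    have : (p ^ a) • c = 0 := by
      rw [hc, nsmul_eq_mul, ← Nat.cast_mul, ZMod.natCast_eq_zero_iff, ← pow_add]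
      exact pow_dvd_pow p (by omega)
    rw [this, smul_zero]
  have key : ∀ x : AddSubgroup.zmultiples c,
      (Multiplicative.ofAdd x.1) ^ p ^ a = 1 := by
    intro x
    rw [← ofAdd_nsmul, hmem x.1 x.2, ofAdd_zero]
  have hinj : Function.Injective (fun x : AddSubgroup.zmultiples c =>
      (⟨Multiplicative.ofAdd x.1, key x⟩ :
        {y : Multiplicative (ZMod (p ^ b)) // y ^ p ^ a = 1})) := by
    intro x y h
    exact Subtype.ext (by simpa using congrArg (fun z => z.1.toAdd) h)
  have hcard : Nat.card (AddSubgroup.zmultiples c) = p ^ min a b := by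
    rw [Nat.card_zmultiples, hc, ZMod.addOrderOf_coe _ (pow_ne_zero _ hp.pos.ne'),
      Nat.gcd_eq_right (pow_dvd_pow p (Nat.sub_le b _)),
      Nat.pow_div (Nat.sub_le b _) hp.pos, Nat.sub_sub_self (min_le_right a b)]
  calc p ^ min a b = Nat.card (AddSubgroup.zmultiples c) := hcard.symm
    _ ≤ _ := Nat.card_le_card_of_injective _ hinj

/-- The rank of a finite abelian group is at most the number of cyclic factors in
any decomposition as a product of cyclic groups. -/
lemma rank_le_of_pi_zmod {L : Type*} [CommGroup L] [Finite L] {ι : Type} [Fintype ι]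
    {n : ι → ℕ} (hn : ∀ i, 1 < n i)
    (e : L ≃* ∀ i, Multiplicative (ZMod (n i))) :
    Group.rank L ≤ Fintype.card ι := by
  classical
  haveI : ∀ i, NeZero (n i) := fun i => ⟨by have := hn i; omega⟩
  set g : ι → L := fun i =>
    e.symm (Pi.mulSingle i (Multiplicative.ofAdd (1 : ZMod (n i)))) with hg
  set S : Finset L := Finset.univ.image g with hS
  have hclos : Subgroup.closure (S : Set L) = ⊤ := by
    rw [eq_top_iff]
    intro x _
    have hx : x = ∏ i, e.symm (Pi.mulSingle i (e x i)) := by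
      apply e.injective
      rw [map_prod]
      simp only [MulEquiv.apply_symm_apply]
      exact (Finset.univ_prod_mulSingle (e x)).symm
    rw [hx]
    apply Subgroup.prod_mem
    intro i _
    have hpow : Pi.mulSingle i (e x i)
        = (Pi.mulSingle (M := fun j => Multiplicative (ZMod (n j))) i
            (Multiplicative.ofAdd (1 : ZMod (n i)))) ^ ((e x i).toAdd.val) := by
      rw [← Pi.mulSingle_pow (f := fun j => Multiplicative (ZMod (n j))) i
        (Multiplicative.ofAdd (1 : ZMod (n i))) ((e x i).toAdd.val)]
      rw [← ofAdd_nsmul, nsmul_eq_mul, mul_one, ZMod.natCast_val, ZMod.cast_id,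
        ofAdd_toAdd]
    rw [hpow, map_pow]
    exact pow_mem (Subgroup.subset_closure (by
      simp only [hS, Finset.coe_image, Set.mem_image]
      exact ⟨i, by simp, rfl⟩)) _
  calc Group.rank L ≤ S.card := Group.rank_le hclos
    _ ≤ Fintype.card ι := by
      simpa using Finset.card_image_le (s := (Finset.univ : Finset ι)) (f := g)

/-- Key torsion counting bound for a finite abelian `p`-group. -/
lemma card_torsion_ge (p : ℕ) [Fact p.Prime] (L : Type*) [CommGroup L] [Finite L]
    (hL : IsPGroup p L) (a : ℕ) (ha : 1 ≤ a) (hexp : p ^ a ≤ Monoid.exponent L) :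
    p ^ a * p ^ (Group.rank L - 1) ≤ Nat.card {x : L // x ^ p ^ a = 1} := by
  classical
  have hp : p.Prime := Fact.out
  obtain ⟨κ, hκ, m, hm, ⟨e⟩⟩ := CommGroup.equiv_prod_multiplicative_zmod_of_finite L
  have hmpow : ∀ j, ∃ bj, 1 ≤ bj ∧ m j = p ^ bj := by
    intro j
    obtain ⟨k, hk⟩ := IsPGroup.iff_card.mp hL
    have hdvd : m j ∣ Nat.card L := by
      rw [Nat.card_congr e.toEquiv, Nat.card_pi]
      calc m j = Nat.card (Multiplicative (ZMod (m j))) := by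
            haveI : NeZero (m j) := ⟨by have := hm j; omega⟩
            simp [Nat.card_eq_fintype_card]
      _ ∣ _ := Finset.dvd_prod_of_mem
            (fun j => Nat.card (Multiplicative (ZMod (m j)))) (Finset.mem_univ j)
    rw [hk] at hdvd
    obtain ⟨bj, _, hbj2⟩ := (Nat.dvd_prime_pow hp).mp hdvd
    refine ⟨bj, ?_, hbj2⟩
    rcases bj with _ | bj
    · exfalso; rw [pow_zero] at hbj2; have := hm j; omega
    · omega
  choose b hb1 hb2 using hmpow
  have hj0 : ∃ j0 : κ, a ≤ b j0 := by
    by_contra h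
    push_neg at h
    have hdvd : Monoid.exponent L ∣ p ^ (a - 1) := by
      apply Monoid.exponent_dvd_of_forall_pow_eq_one
      intro x
      apply e.injective
      rw [map_pow, map_one]
      funext j
      have h1 : (e x j) ^ m j = 1 := by
        haveI : NeZero (m j) := ⟨by have := hm j; omega⟩
        have hcc := pow_card_eq_one' (x := e x j)
        rwa [Nat.card_eq_fintype_card, Fintype.card_multiplicative, ZMod.card] at hcc
      have h2 : m j ∣ p ^ (a - 1) := by
        rw [hb2 j]; exact pow_dvd_pow p (by have := h j; omega)
      obtain ⟨t, ht⟩ := h2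
      show (e x j) ^ p ^ (a - 1) = 1
      rw [ht, pow_mul, h1, one_pow]
    have hle : Monoid.exponent L ≤ p ^ (a - 1) :=
      Nat.le_of_dvd (pow_pos hp.pos _) hdvd
    have h3 : p ^ a ≤ p ^ (a - 1) := le_trans hexp hle
    have h4 := (pow_lt_pow_iff_right₀ hp.one_lt).mpr (show a - 1 < a by omega)
    omega
  obtain ⟨j0, hj0⟩ := hj0
  have hcount : Nat.card {x : L // x ^ p ^ a = 1}
      = ∏ j, Nat.card {z : Multiplicative (ZMod (m j)) // z ^ p ^ a = 1} := by
    rw [← Nat.card_pi]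
    apply Nat.card_congr
    refine (Equiv.subtypeEquiv (q := fun y => y ^ p ^ a = 1) e.toEquiv fun x => ?_).trans
      ((Equiv.subtypeEquivRight fun y => ?_).trans (Equiv.subtypePiEquivPi))
    · show x ^ p ^ a = 1 ↔ (e x) ^ p ^ a = 1
      rw [← map_pow]
      exact ⟨fun h => by rw [h, map_one], fun h => e.injective (by rw [h, map_one])⟩
    · constructor
      · intro h j; rw [← Pi.pow_apply, h, Pi.one_apply]
      · intro h; funext j; rw [Pi.pow_apply, h j, Pi.one_apply]
  rw [hcount]
  have hbound : ∀ j, p ^ min a (b j) ≤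
      Nat.card {z : Multiplicative (ZMod (m j)) // z ^ p ^ a = 1} := by
    intro j
    have := zmod_torsion_card_ge hp a (b j)
    rwa [← hb2 j] at this
  have hstep : ∏ j, (if j = j0 then p ^ a else p)
      ≤ ∏ j, Nat.card {z : Multiplicative (ZMod (m j)) // z ^ p ^ a = 1} := by
    apply Finset.prod_le_prod'
    intro j _
    by_cases hjj : j = j0
    · subst hjj
      simp only [if_pos rfl]
      have : min a (b j) = a := min_eq_left hj0
      calc p ^ a = p ^ min a (b j) := by rw [this]
        _ ≤ _ := hbound j
    · simp only [if_neg hjj]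
      calc p = p ^ 1 := (pow_one p).symm
        _ ≤ p ^ min a (b j) := Nat.pow_le_pow_right hp.pos (by
            have := hb1 j; omega)
        _ ≤ _ := hbound j
  refine le_trans ?_ hstep
  rw [← Finset.mul_prod_erase Finset.univ _ (Finset.mem_univ j0), if_pos rfl]
  have herase : ∏ j ∈ Finset.univ.erase j0, (if j = j0 then p ^ a else p)
      = p ^ (Fintype.card κ - 1) := by
    rw [Finset.prod_congr rfl (fun j hj => if_neg (Finset.ne_of_mem_erase hj)),
      Finset.prod_const, Finset.card_erase_of_mem (Finset.mem_univ j0),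
      Finset.card_univ]
  rw [herase]
  apply Nat.mul_le_mul_left
  apply Nat.pow_le_pow_right hp.pos
  have := rank_le_of_pi_zmod hm e
  omega

lemma card_torsion_le_card_hom (n : ℕ) (hn : n ≠ 0) (L : Type*) [CommGroup L] [Finite L] :
    Nat.card {x : L // x ^ n = 1} ≤ Nat.card (Multiplicative (ZMod n) →* L) := by
  haveI : NeZero n := ⟨hn⟩
  haveI : Finite (Multiplicative (ZMod n) →* L) :=
    Finite.of_injective (fun f => (f : Multiplicative (ZMod n) → L))
      (fun f g h => MonoidHom.ext (congrFun h))
  have hcond : ∀ z : {x : L // x ^ n = 1},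
      (zmultiplesHom (Additive L) (Additive.ofMul z.1)) n = 0 := by
    intro z
    rw [zmultiplesHom_apply]
    have : z.1 ^ (n : ℤ) = 1 := by rw [zpow_natCast, z.2]
    rw [← ofMul_zpow, this, ofMul_one]
  set F : {x : L // x ^ n = 1} → (Multiplicative (ZMod n) →* L) := fun z =>
    MonoidHom.mk' (fun w => Additive.toMul
      ((ZMod.lift n ⟨zmultiplesHom (Additive L) (Additive.ofMul z.1), hcond z⟩) w.toAdd))
      (by intro a b
          show Additive.toMul ((ZMod.lift n _) (a.toAdd + b.toAdd)) = _
          rw [map_add]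
          rfl) with hF
  have hval : ∀ z, F z (Multiplicative.ofAdd ((1 : ℤ) : ZMod n)) = z.1 := by
    intro z
    rw [hF]
    show Additive.toMul ((ZMod.lift n ⟨zmultiplesHom (Additive L)
      (Additive.ofMul z.1), hcond z⟩) (Multiplicative.toAdd
        (Multiplicative.ofAdd ((1 : ℤ) : ZMod n)))) = z.1
    rw [toAdd_ofAdd, ZMod.lift_coe, zmultiplesHom_apply, one_zsmul, toMul_ofMul]
  apply Nat.card_le_card_of_injective F
  intro x y h
  apply Subtype.ext
  rw [← hval x, ← hval y, h]

/-- Main counting lemma: lower bound for the number of homomorphisms between two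
finite abelian `p`-groups, given the exponent condition. -/
lemma card_hom_ge (p : ℕ) [Fact p.Prime] (A L : Type*) [CommGroup A] [Finite A]
    [CommGroup L] [Finite L] (hA : IsPGroup p A) (hL : IsPGroup p L)
    (hexp : Monoid.exponent A ≤ Monoid.exponent L) :
    Nat.card A * p ^ (Group.rank A * (Group.rank L - 1)) ≤ Nat.card (A →* L) := by
  classical
  have hp : p.Prime := Fact.out
  obtain ⟨ι, hι, n, hn, ⟨e⟩⟩ := CommGroup.equiv_prod_multiplicative_zmod_of_finite A
  have hnpow : ∀ i, ∃ bi, 1 ≤ bi ∧ n i = p ^ bi := by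
    intro i
    obtain ⟨k, hk⟩ := IsPGroup.iff_card.mp hA
    have hdvd : n i ∣ Nat.card A := by
      rw [Nat.card_congr e.toEquiv, Nat.card_pi]
      calc n i = Nat.card (Multiplicative (ZMod (n i))) := by
            haveI : NeZero (n i) := ⟨by have := hn i; omega⟩
            simp [Nat.card_eq_fintype_card]
      _ ∣ _ := Finset.dvd_prod_of_mem
            (fun i => Nat.card (Multiplicative (ZMod (n i)))) (Finset.mem_univ i)
    rw [hk] at hdvd
    obtain ⟨bi, _, hbi2⟩ := (Nat.dvd_prime_pow hp).mp hdvd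
    refine ⟨bi, ?_, hbi2⟩
    rcases bi with _ | bi
    · exfalso; rw [pow_zero] at hbi2; have := hn i; omega
    · omega
  choose b hb1 hb2 using hnpow
  have hdvdexp : ∀ i, n i ∣ Monoid.exponent A := by
    intro i
    haveI : NeZero (n i) := ⟨by have := hn i; omega⟩
    have horder : orderOf (e.symm (Pi.mulSingle (M := fun j => Multiplicative (ZMod (n j))) i
        (Multiplicative.ofAdd (1 : ZMod (n i))))) = n i := by
      have h0 : orderOf (e.symm (Pi.mulSingle (M := fun j => Multiplicative (ZMod (n j))) i
          (Multiplicative.ofAdd (1 : ZMod (n i)))))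
          = orderOf (Pi.mulSingle (M := fun j => Multiplicative (ZMod (n j))) i
          (Multiplicative.ofAdd (1 : ZMod (n i)))) :=
        orderOf_injective e.symm.toMonoidHom e.symm.injective _
      rw [h0, orderOf_piMulSingle, orderOf_ofAdd_eq_addOrderOf, ZMod.addOrderOf_one]
    rw [← horder]
    exact Monoid.order_dvd_exponent _
  have hcards : Nat.card (A →* L) = ∏ i, Nat.card (Multiplicative (ZMod (n i)) →* L) := by
    rw [Nat.card_congr ((homPrecompEquiv (L := L) e).trans piHomEquiv), Nat.card_pi]
  have hcardA : Nat.card A = ∏ i, n i := by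
    rw [Nat.card_congr e.toEquiv, Nat.card_pi]
    apply Finset.prod_congr rfl
    intro i _
    haveI : NeZero (n i) := ⟨by have := hn i; omega⟩
    simp [Nat.card_eq_fintype_card]
  rw [hcards]
  have hcomp : ∀ i, n i * p ^ (Group.rank L - 1)
      ≤ Nat.card (Multiplicative (ZMod (n i)) →* L) := by
    intro i
    refine le_trans ?_ (card_torsion_le_card_hom (n i) (by have := hn i; omega) L)
    have h1 : p ^ (b i) ≤ Monoid.exponent L := by
      refine le_trans ?_ hexp
      rw [← hb2 i]
      exact Nat.le_of_dvd (Nat.pos_of_ne_zero Monoid.exponent_ne_zero_of_finite) (hdvdexp i)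
    have := card_torsion_ge p L hL (b i) (hb1 i) h1
    rw [← hb2 i] at this
    exact this
  calc Nat.card A * p ^ (Group.rank A * (Group.rank L - 1))
      ≤ Nat.card A * p ^ (Fintype.card ι * (Group.rank L - 1)) := by
        apply Nat.mul_le_mul_left
        apply Nat.pow_le_pow_right hp.pos
        exact Nat.mul_le_mul_right _ (rank_le_of_pi_zmod hn e)
    _ = ∏ i, (n i * p ^ (Group.rank L - 1)) := by
        rw [Finset.prod_mul_distrib, Finset.prod_const, Finset.card_univ, hcardA, ← pow_mul,
          Nat.mul_comm (Fintype.card ι)]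
    _ ≤ ∏ i, Nat.card (Multiplicative (ZMod (n i)) →* L) :=
        Finset.prod_le_prod' fun i _ => hcomp i

/-- Every homomorphism `G/Z(G) →* L(G)` induces an absolute central automorphism. -/
lemma card_hom_le_card_absCentralAut (G : Type*) [Group G] [Finite G] :
    Nat.card ((G ⧸ Subgroup.center G) →* absoluteCenter G) ≤ Nat.card (absCentralAut G) := by
  haveI : Finite (MulAut G) :=
    Finite.of_injective (fun α : MulAut G => (α : G → G))
      (fun α β h => by ext x; exact congrFun h x)
  have hhom : ∀ f : (G ⧸ Subgroup.center G) →* absoluteCenter G,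
      ∀ g h : G, (g * h) * (f (QuotientGroup.mk (g * h)) : G)
        = (g * (f (QuotientGroup.mk g) : G)) * (h * (f (QuotientGroup.mk h) : G)) := by
    intro f g h
    have hc : ((f (QuotientGroup.mk g) : G)) * h = h * (f (QuotientGroup.mk g) : G) :=
      (Subgroup.mem_center_iff.mp
        (absoluteCenter_le_center G (f (QuotientGroup.mk g)).2) h).symm
    have : (QuotientGroup.mk (g * h) : G ⧸ Subgroup.center G)
        = QuotientGroup.mk g * QuotientGroup.mk h := rfl
    rw [this, map_mul, Subgroup.coe_mul]
    calc g * h * ((f (QuotientGroup.mk g) : G) * (f (QuotientGroup.mk h) : G))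
        = g * ((h * (f (QuotientGroup.mk g) : G)) * (f (QuotientGroup.mk h) : G)) := by
          simp [mul_assoc]
      _ = g * (((f (QuotientGroup.mk g) : G) * h) * (f (QuotientGroup.mk h) : G)) := by
          rw [hc]
      _ = _ := by simp [mul_assoc]
  set Ff : ((G ⧸ Subgroup.center G) →* absoluteCenter G) → (G →* G) := fun f =>
    MonoidHom.mk' (fun g => g * (f (QuotientGroup.mk g) : G)) (fun g h => hhom f g h)
    with hFf
  have hinj : ∀ f, Function.Injective (Ff f) := by
    intro f
    apply (injective_iff_map_eq_one (Ff f)).mpr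
    intro g hg
    rw [hFf] at hg
    have hg' : g * (f (QuotientGroup.mk g) : G) = 1 := hg
    have hgz : g ∈ Subgroup.center G := by
      have : g = ((f (QuotientGroup.mk g) : G))⁻¹ := by
        rw [eq_inv_iff_mul_eq_one]; exact hg'
      rw [this]
      exact (Subgroup.center G).inv_mem
        (absoluteCenter_le_center G (f (QuotientGroup.mk g)).2)
    have hmk : (QuotientGroup.mk g : G ⧸ Subgroup.center G) = 1 :=
      (QuotientGroup.eq_one_iff g).mpr hgz
    rw [hmk, map_one] at hg'
    simpa using hg'
  have hbij : ∀ f, Function.Bijective (Ff f) := fun f =>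
    ⟨hinj f, Finite.surjective_of_injective (hinj f)⟩
  set Φ : ((G ⧸ Subgroup.center G) →* absoluteCenter G) → absCentralAut G := fun f =>
    ⟨MulEquiv.ofBijective (Ff f) (hbij f), by
      intro g
      have : (MulEquiv.ofBijective (Ff f) (hbij f)) g = g * (f (QuotientGroup.mk g) : G) :=
        rfl
      rw [this, inv_mul_cancel_left]
      exact (f (QuotientGroup.mk g)).2⟩ with hΦ
  apply Nat.card_le_card_of_injective Φ
  intro f f' h
  apply MonoidHom.ext
  intro q
  induction q using QuotientGroup.induction_on with
  | H g => ?_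
  have h1 : (Φ f).1 g = (Φ f').1 g := by rw [h]
  have h2 : g * (f (QuotientGroup.mk g) : G) = g * (f' (QuotientGroup.mk g) : G) := h1
  have h3 : (f (QuotientGroup.mk g) : G) = (f' (QuotientGroup.mk g) : G) :=
    mul_left_cancel h2
  exact Subtype.ext h3

/-- Let `G` be a finite `p`-group of nilpotency class `2` with
`exp(G/Z(G)) ≤ exp(L(G))`.  Then `|Aut_l(G)| ≥ |G/Z(G)| * p ^ (r * (s - 1))`,
where `r` is the rank of `G/Z(G)` and `s` is the rank of `L(G)`. -/
theorem card_absCentralAut_ge {p : ℕ} [Fact p.Prime] (G : Type*) [Group G] [Finite G]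
    (hG : IsPGroup p G)
    (hclass : upperCentralSeries G 2 = ⊤ ∧ upperCentralSeries G 1 ≠ ⊤)
    (hexp : Monoid.exponent (G ⧸ Subgroup.center G) ≤
      Monoid.exponent (absoluteCenter G)) :
    Nat.card (G ⧸ Subgroup.center G) *
        p ^ (Group.rank (G ⧸ Subgroup.center G) * (Group.rank (absoluteCenter G) - 1)) ≤
      Nat.card (absCentralAut G) := by
  have hcent : Subgroup.center (G ⧸ Subgroup.center G) = ⊤ := by
    rw [eq_top_iff]
    intro x _
    induction x using QuotientGroup.induction_on with
    | H g => ?_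
    rw [Subgroup.mem_center_iff]
    intro y
    induction y using QuotientGroup.induction_on with
    | H h => ?_
    have hcomm : g⁻¹ * h⁻¹ * g * h ∈ Subgroup.center G := by
      have hg2 : g⁻¹ ∈ upperCentralSeries G 2 := by rw [hclass.1]; trivial
      have := (mem_upperCentralSeries_succ_iff (n := 1)).mp hg2 h⁻¹
      rw [upperCentralSeries_one] at this
      simpa [inv_inv, commutatorElement_def] using this
    show QuotientGroup.mk h * QuotientGroup.mk g = QuotientGroup.mk g * QuotientGroup.mk h
    rw [← QuotientGroup.mk_mul, ← QuotientGroup.mk_mul, QuotientGroup.eq]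
    have : (h * g)⁻¹ * (g * h) = g⁻¹ * h⁻¹ * g * h := by group
    rwa [this]
  letI : CommGroup (G ⧸ Subgroup.center G) := Group.commGroupOfCenterEqTop hcent
  have hA : IsPGroup p (G ⧸ Subgroup.center G) := hG.to_quotient _
  have hL : IsPGroup p (absoluteCenter G) := hG.to_subgroup _
  refine le_trans ?_ (card_hom_le_card_absCentralAut G)
  exact card_hom_ge p _ _ hA hL hexp
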